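/- Let N ≥ 1, let c ∈ h^{1/2}, set A := Γ_cΓ_c*, and assume that the vectors Ac, A²c, …, A^N c are linearly independent in ℓ²(ℕ,ℂ). Let G be the N×N matrix with entries G_{k,ℓ} = ⟨A^{k+ℓ} c, c⟩ for 0 ≤ k, ℓ ≤ N−1, and let B be the N×N matrix obtained from G by replacing its last column (the column ℓ = N−1) by the column (⟨A^{k+N} c, c⟩)_{0≤k≤N−1}. Then det G ≠ 0 and Σ_{n≥0} (n+1)|c_n|² ≥ det B / det G (the left-hand side being the trace of Γ_cΓ_c*), with equality if and only if Γ_c has rank N. -/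

import Mathlib

open scoped InnerProductSpace ComplexConjugate ENNReal

noncomputable section

/-- The Hilbert space `ℓ²(ℕ, ℂ)`. -/
abbrev L2 : Type := lp (fun _ : ℕ => ℂ) 2

/-- Membership in the space `h^{1/2}`: `c ∈ ℓ²` and `Σ n |c_n|² < ∞`. -/
def InH12 (c : ℕ → ℂ) : Prop :=
  Memℓp c 2 ∧ Summable (fun n : ℕ => (n : ℝ) * ‖c n‖ ^ 2)

/-- `Γ` is the Hankel operator of symbol `c`: `(Γ x)_n = Σ_p c_{n+p} x_p`. -/
def IsHankelOp (c : ℕ → ℂ) (Γ : L2 →L[ℂ] L2) : Prop :=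
  ∀ x : L2, ∀ n : ℕ, (Γ x : ℕ → ℂ) n = ∑' p : ℕ, c (n + p) * (x : ℕ → ℂ) p

/-- The shifted sequence `c̃ : n ↦ c_{n+1}`. -/
def shiftSeq (c : ℕ → ℂ) : ℕ → ℂ := fun n => c (n + 1)

/-- The operator `Γ Γ*`. -/
def opT (Γ : L2 →L[ℂ] L2) : L2 →L[ℂ] L2 :=
  Γ ∘L ContinuousLinearMap.adjoint Γ

/-- `e₀ = (1,0,0,…) ∈ ℓ²`. -/
def e0 : L2 := lp.single 2 0 1

/-- Generic min–max value `a_j` (for `j ≥ 1`) of a bounded operator `T` on a Hilbert space: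
the infimum over subspaces `F` of dimension at most `j-1` of the supremum of `Re ⟨T h, h⟩`
over unit vectors `h` orthogonal to `F`. -/
def minmaxVal {H : Type*} [NormedAddCommGroup H] [InnerProductSpace ℂ H]
    (T : H →L[ℂ] H) (j : ℕ) : ℝ :=
  ⨅ F : {F : Submodule ℂ H // Module.finrank ℂ F ≤ j - 1},
    ⨆ h : {h : H // ‖h‖ = 1 ∧ ∀ y ∈ F.1, ⟪y, h⟫_ℂ = 0},
      (⟪T h.1, h.1⟫_ℂ).re

/-- `λ_j(Γ)²` (for `j ≥ 1`): the `j`-th min–max value of `Γ Γ*`. -/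
def svalSq (Γ : L2 →L[ℂ] L2) (j : ℕ) : ℝ := minmaxVal (opT Γ) j

lemma summable_sq_of_memℓp {f : ℕ → ℂ} (hf : Memℓp f 2) :
    Summable fun n : ℕ => ‖f n‖ ^ 2 := by
  have h := hf.summable (p := 2) (by norm_num)
  have h2 : ((2 : ℝ≥0∞).toReal) = ((2 : ℕ) : ℝ) := by norm_num
  rw [h2] at h
  simpa [Real.rpow_natCast] using h

/-- The weighted sequence `n ↦ √(1+n) · c_n`, whose `ℓ²` norm is the `h^{1/2}` norm of `c`. -/
def wSeq (c : ℕ → ℂ) : ℕ → ℂ := fun n => (Real.sqrt (1 + (n : ℝ)) : ℂ) * c n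

lemma memℓp_wSeq {c : ℕ → ℂ} (hc : InH12 c) : Memℓp (wSeq c) 2 := by
  apply memℓp_gen
  have h2 : ((2 : ℝ≥0∞).toReal) = ((2 : ℕ) : ℝ) := by norm_num
  rw [h2]
  have hs : Summable fun n : ℕ => (1 + (n : ℝ)) * ‖c n‖ ^ 2 := by
    have := (summable_sq_of_memℓp hc.1).add hc.2
    convert this using 2 with n
    ring
  have key : ∀ n : ℕ, ‖wSeq c n‖ ^ ((2 : ℕ) : ℝ) = (1 + (n : ℝ)) * ‖c n‖ ^ 2 := by
    intro n
    rw [Real.rpow_natCast]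
    have h1 : (0 : ℝ) ≤ 1 + (n : ℝ) := by positivity
    simp only [wSeq, norm_mul, Complex.norm_real, Real.norm_eq_abs,
      abs_of_nonneg (Real.sqrt_nonneg _)]
    rw [mul_pow, Real.sq_sqrt h1]
  exact (summable_congr fun n => key n).mpr hs

/-- The space `h^{1/2}` as a type. -/
def H12 : Type := {c : ℕ → ℂ // InH12 c}

/-- The isometric embedding of `h^{1/2}` into `ℓ²` given by `c ↦ (√(1+n) c_n)_n`;
the `h^{1/2}` norm of `c` is the `ℓ²` norm of its image. -/
def H12.toL2 (c : H12) : L2 := ⟨wSeq c.1, memℓp_wSeq c.2⟩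

lemma H12.toL2_injective : Function.Injective H12.toL2 := by
  intro c d h
  apply Subtype.ext
  funext n
  have h' : wSeq c.1 n = wSeq d.1 n := congrFun (congrArg Subtype.val h) n
  have hs : (Real.sqrt (1 + (n : ℝ)) : ℂ) ≠ 0 := by
    simp only [ne_eq, Complex.ofReal_eq_zero]
    positivity
  exact mul_left_cancel₀ hs h'

/-- The metric (hence the topology) on `h^{1/2}` induced by the `h^{1/2}` norm
`(Σ (1+n)|c_n|²)^{1/2}`, obtained from the isometric embedding into `ℓ²`. -/
instance : MetricSpace H12 := MetricSpace.induced H12.toL2 H12.toL2_injective inferInstance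

/-- The Gram matrix `G_{k,ℓ} = ⟨A^{k+ℓ} v, v⟩`, `0 ≤ k, ℓ ≤ N-1`. -/
def gramG (A : L2 →L[ℂ] L2) (v : L2) (N : ℕ) : Matrix (Fin N) (Fin N) ℂ :=
  fun k l => ⟪v, (A ^ ((k : ℕ) + (l : ℕ))) v⟫_ℂ

/-- The matrix `B`: the Gram matrix `G` with its last column replaced by
`(⟨A^{k+N} v, v⟩)_{0 ≤ k ≤ N-1}`. -/
def gramB (A : L2 →L[ℂ] L2) (v : L2) (N : ℕ) : Matrix (Fin N) (Fin N) ℂ :=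
  fun k l => if (l : ℕ) = N - 1 then ⟪v, (A ^ ((k : ℕ) + N)) v⟫_ℂ
    else ⟪v, (A ^ ((k : ℕ) + (l : ℕ))) v⟫_ℂ


/-! ### Auxiliary lemmas for the proof -/

open scoped Matrix

section Aux

set_option maxHeartbeats 1000000

/-- Equality case of Bessel's inequality for a finite orthonormal family. -/
lemma bessel_eq_span_iff {E : Type*} [NormedAddCommGroup E] [InnerProductSpace ℂ E]
    {n : ℕ} {f : Fin n → E} (hf : Orthonormal ℂ f) (x : E) :
    (∑ j, ‖⟪f j, x⟫_ℂ‖ ^ 2 = ‖x‖ ^ 2) ↔ x ∈ Submodule.span ℂ (Set.range f) := by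
  classical
  set s : E := ∑ j, ⟪f j, x⟫_ℂ • f j with hs
  have hs_mem : s ∈ Submodule.span ℂ (Set.range f) :=
    Submodule.sum_mem _ fun j _ => Submodule.smul_mem _ _ (Submodule.subset_span ⟨j, rfl⟩)
  have hinner : ∀ i, ⟪f i, x - s⟫_ℂ = 0 := by
    intro i
    rw [inner_sub_right, hs, inner_sum]
    simp only [inner_smul_right]
    rw [Finset.sum_eq_single i]
    · simp [orthonormal_iff_ite.mp hf i i, hf.1 i]
    · intro j _ hj
      simp [orthonormal_iff_ite.mp hf i j, hj.symm]
    · simp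
  have hortho : ∀ y ∈ Submodule.span ℂ (Set.range f), ⟪y, x - s⟫_ℂ = 0 := by
    intro y hy
    induction hy using Submodule.span_induction with
    | mem z hz => obtain ⟨i, rfl⟩ := hz; exact hinner i
    | zero => simp
    | add a b _ _ ha hb => rw [inner_add_left, ha, hb, add_zero]
    | smul t a _ ha => rw [inner_smul_left, ha, mul_zero]
  have hso : ⟪s, x - s⟫_ℂ = 0 := hortho s hs_mem
  have hpyth : ‖x‖ ^ 2 = ‖s‖ ^ 2 + ‖x - s‖ ^ 2 := by
    have h1 : ‖s + (x - s)‖ * ‖s + (x - s)‖ = ‖s‖ * ‖s‖ + ‖x - s‖ * ‖x - s‖ :=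
      norm_add_sq_eq_norm_sq_add_norm_sq_of_inner_eq_zero s (x - s) hso
    have h2 : s + (x - s) = x := by abel
    rw [h2] at h1
    ring_nf
    ring_nf at h1
    linarith [h1]
  have hnorms : ‖s‖ ^ 2 = ∑ j, ‖⟪f j, x⟫_ℂ‖ ^ 2 := by
    have h1 : ⟪s, s⟫_ℂ = ∑ j, conj ⟪f j, x⟫_ℂ * ⟪f j, x⟫_ℂ := hf.inner_sum _ _ _
    have h2 : (‖s‖ ^ 2 : ℝ) = Complex.re ⟪s, s⟫_ℂ := by
      rw [@norm_sq_eq_re_inner ℂ]; rfl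
    rw [h2, h1, Complex.re_sum]
    congr 1; funext j
    rw [mul_comm, Complex.mul_conj', ← Complex.ofReal_pow, Complex.ofReal_re]
  constructor
  · intro heq
    have : ‖x - s‖ ^ 2 = 0 := by rw [hpyth, hnorms] at heq; linarith
    have hxs : x = s := by
      have := pow_eq_zero_iff (n := 2) (by norm_num) |>.mp this
      rw [norm_eq_zero] at this
      rw [sub_eq_zero] at this; exact this
    rw [hxs]; exact hs_mem
  · intro hx
    have hxs_mem : x - s ∈ Submodule.span ℂ (Set.range f) := Submodule.sub_mem _ hx hs_mem
    have : ⟪x - s, x - s⟫_ℂ = 0 := hortho _ hxs_mem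
    have hxs : x - s = 0 := inner_self_eq_zero.mp this
    have : x = s := by rwa [sub_eq_zero] at hxs
    rw [hpyth, hnorms, this, sub_self, norm_zero]
    norm_num

/-- The bijection `(m, i) ↦ (i, m - i)` between `Σ m, Fin (m+1)` and `ℕ × ℕ`. -/
def natEquiv : (Σ m : ℕ, Fin (m + 1)) ≃ ℕ × ℕ where
  toFun q := (q.2.1, q.1 - q.2.1)
  invFun x := ⟨x.1 + x.2, ⟨x.1, Nat.lt_succ_of_le (Nat.le_add_right _ _)⟩⟩
  left_inv := by
    rintro ⟨m, i⟩
    have hi : (i : ℕ) ≤ m := Nat.lt_succ_iff.mp i.isLt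
    have h1 : (i : ℕ) + (m - (i : ℕ)) = m := by omega
    refine Sigma.ext h1 ?_
    rw [Fin.heq_ext_iff (show (i:ℕ) + (m - (i:ℕ)) + 1 = m + 1 by omega)]
  right_inv := by
    rintro ⟨n, p⟩
    simp

lemma shifted_summand_summable {g : ℕ → ℝ} (hg : ∀ m, 0 ≤ g m)
    (h : Summable fun m : ℕ => ((m : ℝ) + 1) * g m) :
    Summable (fun q : Σ m : ℕ, Fin (m + 1) => g q.1) := by
  rw [summable_sigma_of_nonneg (fun q => hg q.1)]
  constructor
  · intro m; exact Summable.of_finite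
  · have : (fun m : ℕ => ∑' i : Fin (m + 1), g m) = fun m : ℕ => ((m : ℝ) + 1) * g m := by
      funext m
      rw [tsum_fintype]
      simp [Finset.sum_const, nsmul_eq_mul]
    rw [this]; exact h

lemma tsum_sigma_shifted {g : ℕ → ℝ} (hg : ∀ m, 0 ≤ g m)
    (h : Summable fun m : ℕ => ((m : ℝ) + 1) * g m) :
    (∑' q : Σ m : ℕ, Fin (m + 1), g q.1) = ∑' m : ℕ, ((m : ℝ) + 1) * g m := by
  rw [Summable.tsum_sigma' (fun b => Summable.of_finite) (shifted_summand_summable hg h)]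
  congr 1; funext m
  rw [tsum_fintype]
  simp [Finset.sum_const, nsmul_eq_mul]

lemma summable_pair_shifted {g : ℕ → ℝ} (hg : ∀ m, 0 ≤ g m)
    (h : Summable fun m : ℕ => ((m : ℝ) + 1) * g m) :
    Summable (fun x : ℕ × ℕ => g (x.1 + x.2)) := by
  have h2 := (shifted_summand_summable hg h)
  have := (Equiv.summable_iff natEquiv (f := fun x : ℕ × ℕ => g (x.1 + x.2))).mp ?_
  · exact this
  · convert h2 using 1
    funext q
    simp [natEquiv]
    congr 1
    have : (q.2 : ℕ) ≤ q.1 := Nat.lt_succ_iff.mp q.2.isLt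
    omega

lemma summable_inner_shifted {g : ℕ → ℝ} (hg : ∀ m, 0 ≤ g m)
    (h : Summable fun m : ℕ => ((m : ℝ) + 1) * g m) (p : ℕ) :
    Summable (fun n : ℕ => g (p + n)) := by
  have := (summable_pair_shifted hg h).comp_injective
    (i := fun n : ℕ => ((p, n) : ℕ × ℕ)) (fun a b hab => by simpa using hab)
  exact this

lemma summable_outer_shifted {g : ℕ → ℝ} (hg : ∀ m, 0 ≤ g m)
    (h : Summable fun m : ℕ => ((m : ℝ) + 1) * g m) :
    Summable (fun p : ℕ => ∑' n, g (p + n)) :=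
  ((summable_pair_shifted hg h).hasSum.prod_fiberwise
    (fun p => (summable_inner_shifted hg h p).hasSum)).summable

lemma tsum_tsum_shifted {g : ℕ → ℝ} (hg : ∀ m, 0 ≤ g m)
    (h : Summable fun m : ℕ => ((m : ℝ) + 1) * g m) :
    (∑' p, ∑' n, g (p + n)) = ∑' m : ℕ, ((m : ℝ) + 1) * g m := by
  rw [← Summable.tsum_prod' (summable_pair_shifted hg h) (summable_inner_shifted hg h)]
  rw [← tsum_sigma_shifted hg h]
  rw [← Equiv.tsum_eq natEquiv (fun x : ℕ × ℕ => g (x.1 + x.2))]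
  congr 1; funext q
  simp [natEquiv]
  congr 1
  have : (q.2 : ℕ) ≤ q.1 := Nat.lt_succ_iff.mp q.2.isLt
  omega

/-- The key Gram-matrix identity: `det B / det G` is the trace of the compression of `A`
to the Krylov subspace, computed in any orthonormal basis obtained from the Krylov family. -/
lemma gram_formula (N : ℕ) (hN : 1 ≤ N) (A : L2 →L[ℂ] L2) (hA : IsSelfAdjoint A) (v : L2)
    (hu : LinearIndependent ℂ (fun k : Fin N => (A ^ (k : ℕ)) v)) :
    (gramG A v N).det ≠ 0 ∧
    ∃ f : Fin N → L2, Orthonormal ℂ f ∧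
      Submodule.span ℂ (Set.range f)
        = Submodule.span ℂ (Set.range (fun k : Fin N => (A ^ (k : ℕ)) v)) ∧
      (∑ j, ⟪f j, A (f j)⟫_ℂ) = (gramB A v N).det / (gramG A v N).det := by
  classical
  set u : Fin N → L2 := fun k => (A ^ (k : ℕ)) v with hu_def
  have hApow : ∀ (m : ℕ) (x y : L2), ⟪(A ^ m) x, y⟫_ℂ = ⟪x, (A ^ m) y⟫_ℂ := by
    intro m x y
    have hm : ContinuousLinearMap.adjoint (A ^ m) = A ^ m :=
      ContinuousLinearMap.isSelfAdjoint_iff'.mp (hA.pow m)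
    conv_lhs => rw [← hm]
    rw [ContinuousLinearMap.adjoint_inner_left]
  have huu : ∀ k l : ℕ, ⟪(A ^ k) v, (A ^ l) v⟫_ℂ = ⟪v, (A ^ (k + l)) v⟫_ℂ := by
    intro k l
    rw [hApow k, ← ContinuousLinearMap.mul_apply, ← pow_add]
  have hG : ∀ k l : Fin N, gramG A v N k l = ⟪u k, u l⟫_ℂ := fun k l => (huu k l).symm
  have hH : ∀ k l : Fin N, ⟪u k, A (u l)⟫_ℂ = ⟪v, (A ^ ((k : ℕ) + (l : ℕ) + 1)) v⟫_ℂ := by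
    intro k l
    show ⟪(A ^ (k : ℕ)) v, A ((A ^ (l : ℕ)) v)⟫_ℂ = _
    have h1 : A ((A ^ (l : ℕ)) v) = (A ^ ((l : ℕ) + 1)) v := by
      rw [pow_succ']
      rfl
    rw [h1, huu, ← add_assoc]
  set K : Submodule ℂ L2 := Submodule.span ℂ (Set.range u) with hK_def
  have hKfd : FiniteDimensional ℂ K := FiniteDimensional.span_of_finite ℂ (Set.finite_range u)
  have hrk : Module.finrank ℂ K = N := by
    rw [finrank_span_eq_card hu, Fintype.card_fin]
  let b : OrthonormalBasis (Fin N) ℂ K := (stdOrthonormalBasis ℂ K).reindex (finCongr hrk)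
  set f : Fin N → L2 := fun j => (b j : L2) with hf_def
  have hf_on : Orthonormal ℂ f := by
    rw [orthonormal_iff_ite]
    intro i j
    rw [show ⟪f i, f j⟫_ℂ = ⟪b i, b j⟫_ℂ from rfl]
    exact orthonormal_iff_ite.mp b.orthonormal i j
  have hspan : Submodule.span ℂ (Set.range f) = K := by
    have h1 : Set.range f = K.subtype '' Set.range b := by
      rw [← Set.range_comp]; rfl
    rw [h1, ← Submodule.map_span, ← OrthonormalBasis.coe_toBasis b, b.toBasis.span_eq,
      Submodule.map_subtype_top]
  have hcoord : ∀ j, ∃ a : Fin N → ℂ, ∑ k, a k • u k = f j := by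
    intro j
    have : f j ∈ K := by
      rw [← hspan]; exact Submodule.subset_span ⟨j, rfl⟩
    rw [hK_def] at this
    exact (Submodule.mem_span_range_iff_exists_fun ℂ).mp this
  choose Sc hSc using hcoord
  set S : Matrix (Fin N) (Fin N) ℂ := fun k j => Sc j k with hS_def
  have hfj : ∀ j, f j = ∑ k, S k j • u k := fun j => (hSc j).symm
  set G : Matrix (Fin N) (Fin N) ℂ := gramG A v N with hG_def
  set B : Matrix (Fin N) (Fin N) ℂ := gramB A v N with hB_def
  have hSGS : Sᴴ * G * S = 1 := by
    ext i j
    have hij := orthonormal_iff_ite.mp hf_on i j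
    rw [hfj i, hfj j] at hij
    simp only [inner_sum, sum_inner, inner_smul_left, inner_smul_right] at hij
    rw [Matrix.mul_apply, Matrix.one_apply, ← hij]
    simp only [Matrix.mul_apply, Matrix.conjTranspose_apply, Finset.sum_mul, Finset.mul_sum]
    refine Finset.sum_congr rfl fun l _ => Finset.sum_congr rfl fun k _ => ?_
    rw [hG]
    simp only [RCLike.star_def]
    ring
  have hdet1 : Sᴴ.det * G.det * S.det = 1 := by
    have := congrArg Matrix.det hSGS
    rwa [Matrix.det_mul, Matrix.det_mul, Matrix.det_one] at this
  have hdetG : G.det ≠ 0 := by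
    intro h
    rw [h, mul_zero, zero_mul] at hdet1
    exact zero_ne_one hdet1
  have hdetS : IsUnit S.det := by
    apply IsUnit.of_mul_eq_one (Sᴴ.det * G.det)
    rw [← hdet1]; ring
  have hSSinv : S * S⁻¹ = 1 := Matrix.mul_nonsing_inv S hdetS
  have hSSG : S * Sᴴ * G = 1 := by
    calc S * Sᴴ * G = S * Sᴴ * G * (S * S⁻¹) := by rw [hSSinv, mul_one]
      _ = S * (Sᴴ * G * S) * S⁻¹ := by simp only [mul_assoc]
      _ = 1 := by rw [hSGS, mul_one, hSSinv]
  set bvec : Fin N → ℂ := fun k => ⟪v, (A ^ ((k : ℕ) + N)) v⟫_ℂ with hbvec_def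
  set H : Matrix (Fin N) (Fin N) ℂ :=
    fun k l => ⟪v, (A ^ ((k : ℕ) + (l : ℕ) + 1)) v⟫_ℂ with hH_def
  set C : Matrix (Fin N) (Fin N) ℂ := fun k l =>
    if (l : ℕ) = N - 1 then G.det⁻¹ * Matrix.cramer G bvec k
    else if (k : ℕ) = (l : ℕ) + 1 then 1 else 0 with hC_def
  have hGC : G * C = H := by
    ext k l
    rw [Matrix.mul_apply]
    by_cases hl : (l : ℕ) = N - 1
    · have h1 : ∀ m, G k m * C m l = G.det⁻¹ * (G k m * Matrix.cramer G bvec m) := by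
        intro m
        rw [hC_def]
        simp only [hl, if_true]
        ring
      rw [Finset.sum_congr rfl fun m _ => h1 m, ← Finset.mul_sum]
      have h2 : ∑ m, G k m * Matrix.cramer G bvec m = (G *ᵥ Matrix.cramer G bvec) k := rfl
      rw [h2, Matrix.mulVec_cramer]
      simp only [Pi.smul_apply, smul_eq_mul]
      rw [← mul_assoc, inv_mul_cancel₀ hdetG, one_mul]
      show bvec k = H k l
      rw [hbvec_def, hH_def]
      simp only
      congr 3
      omega
    · have hl1 : (l : ℕ) + 1 < N := by
        have := l.isLt
        omega
      rw [Finset.sum_eq_single (⟨(l : ℕ) + 1, hl1⟩ : Fin N)]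
      · have hC1 : C (⟨(l : ℕ) + 1, hl1⟩ : Fin N) l = 1 := by
          simp [hC_def, hl]
        rw [hC1, mul_one]
        show G k ⟨(l : ℕ) + 1, hl1⟩ = H k l
        rw [hG_def, hH_def]
        show ⟪v, (A ^ ((k : ℕ) + ((l : ℕ) + 1))) v⟫_ℂ = ⟪v, (A ^ ((k : ℕ) + (l : ℕ) + 1)) v⟫_ℂ
        rw [← add_assoc]
      · intro m _ hm
        have hm' : (m : ℕ) ≠ (l : ℕ) + 1 := by
          intro h
          apply hm
          exact Fin.ext h
        rw [hC_def]
        simp only [hl, if_false, hm', mul_zero]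
      · intro h
        exact absurd (Finset.mem_univ _) h
  have htrC : Matrix.trace C = B.det / G.det := by
    have hlast : N - 1 < N := by omega
    rw [Matrix.trace]
    rw [Finset.sum_eq_single (⟨N - 1, hlast⟩ : Fin N)]
    · rw [Matrix.diag_apply, hC_def]
      simp only [if_pos rfl]
      rw [Matrix.cramer_apply]
      have hB2 : G.updateCol (⟨N - 1, hlast⟩ : Fin N) bvec = B := by
        ext k l
        rw [Matrix.updateCol_apply, hB_def]
        by_cases h : l = (⟨N - 1, hlast⟩ : Fin N)
        · rw [if_pos h]
          have : (l : ℕ) = N - 1 := by rw [h]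
          rw [gramB]
          simp only [this, if_pos rfl]
          rfl
        · rw [if_neg h]
          have : (l : ℕ) ≠ N - 1 := fun hh => h (Fin.ext hh)
          rw [gramB]
          simp only [this, if_false]
          rfl
      rw [hB2, div_eq_mul_inv, mul_comm]
      simp
    · intro m _ hm
      have hm' : (m : ℕ) ≠ N - 1 := fun h => hm (Fin.ext h)
      rw [Matrix.diag_apply, hC_def]
      simp only [hm', if_false]
      simp
    · intro h
      exact absurd (Finset.mem_univ _) h
  have htr_eq : ∑ j, ⟪f j, A (f j)⟫_ℂ = Matrix.trace (Sᴴ * H * S) := by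
    rw [Matrix.trace]
    refine Finset.sum_congr rfl fun j _ => ?_
    rw [Matrix.diag_apply, hfj j]
    have hAf : A (∑ k, S k j • u k) = ∑ l, S l j • A (u l) := by
      rw [map_sum]
      refine Finset.sum_congr rfl fun l _ => ?_
      rw [ContinuousLinearMap.map_smul]
    rw [hAf]
    have hH' : ∀ k l, H k l = ⟪u k, A (u l)⟫_ℂ := fun k l => (hH k l).symm
    simp only [inner_sum, sum_inner, inner_smul_left, inner_smul_right]
    simp only [Matrix.mul_apply, Matrix.conjTranspose_apply, Finset.sum_mul, Finset.mul_sum]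
    refine Finset.sum_congr rfl fun l _ => Finset.sum_congr rfl fun k _ => ?_
    rw [hH']
    simp only [RCLike.star_def]
    ring
  have htr2 : Matrix.trace (Sᴴ * H * S) = Matrix.trace C := by
    rw [Matrix.trace_mul_comm (Sᴴ * H) S, ← mul_assoc, ← hGC, ← mul_assoc, hSSG, one_mul]
  refine ⟨hdetG, f, hf_on, ?_, ?_⟩
  · rw [hspan]
  · rw [htr_eq, htr2, htrC]

section HankelAux
variable {c : ℕ → ℂ} {Γ : L2 →L[ℂ] L2}

/-- coordinates of `Γ eₚ`. -/
lemma hankel_single_coord (hΓ : IsHankelOp c Γ) (p n : ℕ) :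
    (Γ (lp.single 2 p 1) : ℕ → ℂ) n = c (n + p) := by
  rw [hΓ]
  rw [tsum_eq_single p]
  · rw [lp.single_apply_self, mul_one]
  · intro q hq
    rw [lp.single_apply_ne 2 p _ hq, mul_zero]

/-- norm² of an `ℓ²` element. -/
lemma norm_sq_eq_tsum_l2 (x : L2) : ‖x‖ ^ 2 = ∑' n, ‖(x : ℕ → ℂ) n‖ ^ 2 := by
  have h := lp.norm_rpow_eq_tsum (p := (2 : ℝ≥0∞)) (by norm_num) x
  have h2 : ((2 : ℝ≥0∞).toReal) = (2 : ℝ) := by norm_num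
  rw [h2] at h
  have h3 : ‖x‖ ^ (2 : ℝ) = ‖x‖ ^ 2 := by
    rw [← Real.rpow_natCast ‖x‖ 2]; norm_num
  rw [← h3, h]
  refine tsum_congr fun n => ?_
  rw [← Real.rpow_natCast ‖(x : ℕ → ℂ) n‖ 2]; norm_num

lemma hankel_single_norm_sq (hΓ : IsHankelOp c Γ) (p : ℕ) :
    ‖Γ (lp.single 2 p 1)‖ ^ 2 = ∑' n, ‖c (n + p)‖ ^ 2 := by
  rw [norm_sq_eq_tsum_l2]
  exact tsum_congr fun n => by rw [hankel_single_coord hΓ]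

/-- coordinates of `Γ* x`. -/
lemma hankel_adjoint_coord (x : L2) (p : ℕ) :
    ((ContinuousLinearMap.adjoint Γ) x : ℕ → ℂ) p = ⟪Γ (lp.single 2 p 1), x⟫_ℂ := by
  have h1 : ⟪lp.single 2 p (1:ℂ), (ContinuousLinearMap.adjoint Γ) x⟫_ℂ
      = ((ContinuousLinearMap.adjoint Γ) x : ℕ → ℂ) p := by
    rw [lp.inner_single_left]
    simp
  rw [← h1, ContinuousLinearMap.adjoint_inner_right]

lemma hankel_adjoint_norm_sq (x : L2) :
    ‖(ContinuousLinearMap.adjoint Γ) x‖ ^ 2 = ∑' p, ‖⟪Γ (lp.single 2 p 1), x⟫_ℂ‖ ^ 2 := by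
  rw [norm_sq_eq_tsum_l2]
  exact tsum_congr fun p => by rw [hankel_adjoint_coord]

lemma hankel_adjoint_coord_summable (x : L2) :
    Summable fun p => ‖⟪Γ (lp.single 2 p 1), x⟫_ℂ‖ ^ 2 := by
  have := summable_sq_of_memℓp ((ContinuousLinearMap.adjoint Γ) x).2
  exact this.congr fun p => by rw [hankel_adjoint_coord]

end HankelAux

end Aux

set_option maxHeartbeats 3000000
set_option synthInstance.maxHeartbeats 400000

/-- If `A = Γ_cΓ_c*` and `Ac, A²c, …, A^N c` are linearly independent, then `det G ≠ 0`,
the quotient `det B / det G` is real, and `Tr(Γ_cΓ_c*) = Σ (n+1)|c_n|² ≥ det B / det G`,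
with equality if and only if `Γ_c` has rank `N`. -/
theorem statement14 (N : ℕ) (hN : 1 ≤ N) (c : ℕ → ℂ) (hc : InH12 c)
    (Γ : L2 →L[ℂ] L2) (hΓ : IsHankelOp c Γ)
    (hind : LinearIndependent ℂ
      (fun k : Fin N => ((opT Γ) ^ ((k : ℕ) + 1)) (⟨c, hc.1⟩ : L2))) :
    (gramG (opT Γ) (⟨c, hc.1⟩ : L2) N).det ≠ 0 ∧
    ((gramB (opT Γ) (⟨c, hc.1⟩ : L2) N).det /
        (gramG (opT Γ) (⟨c, hc.1⟩ : L2) N).det).im = 0 ∧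
    ((gramB (opT Γ) (⟨c, hc.1⟩ : L2) N).det /
        (gramG (opT Γ) (⟨c, hc.1⟩ : L2) N).det).re
      ≤ ∑' n : ℕ, ((n : ℝ) + 1) * ‖c n‖ ^ 2 ∧
    ((∑' n : ℕ, ((n : ℝ) + 1) * ‖c n‖ ^ 2) =
        ((gramB (opT Γ) (⟨c, hc.1⟩ : L2) N).det /
          (gramG (opT Γ) (⟨c, hc.1⟩ : L2) N).det).re ↔
      LinearMap.rank Γ.toLinearMap = N) := by
  classical
  set v : L2 := (⟨c, hc.1⟩ : L2) with hv_def
  set A : L2 →L[ℂ] L2 := opT Γ with hA_def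
  have hA_sa : IsSelfAdjoint A := by
    rw [ContinuousLinearMap.isSelfAdjoint_iff']
    show ContinuousLinearMap.adjoint (Γ ∘L ContinuousLinearMap.adjoint Γ) = _
    rw [ContinuousLinearMap.adjoint_comp, ContinuousLinearMap.adjoint_adjoint]
    rfl
  have hu_indep : LinearIndependent ℂ (fun k : Fin N => (A ^ (k : ℕ)) v) := by
    rw [Fintype.linearIndependent_iff]
    intro g hg
    apply Fintype.linearIndependent_iff.mp hind g
    have h3 : A (∑ k, g k • (A ^ (k : ℕ)) v) = 0 := by rw [hg, map_zero]
    rw [map_sum] at h3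
    rw [← h3]
    refine Finset.sum_congr rfl fun k _ => ?_
    rw [ContinuousLinearMap.map_smul]
    congr 1
    rw [pow_succ']
    rfl
  obtain ⟨hdetG, f, hf_on, hf_span, hf_sum⟩ := gram_formula N hN A hA_sa v hu_indep
  set K : Submodule ℂ L2 :=
    Submodule.span ℂ (Set.range (fun k : Fin N => (A ^ (k : ℕ)) v)) with hK_def
  haveI hKfd : FiniteDimensional ℂ K := FiniteDimensional.span_of_finite ℂ (Set.finite_range _)
  have hrkK : Module.finrank ℂ K = N := by
    rw [hK_def, finrank_span_eq_card hu_indep, Fintype.card_fin]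
  have hAx : ∀ x : L2,
      ⟪x, A x⟫_ℂ = ((‖(ContinuousLinearMap.adjoint Γ) x‖ ^ 2 : ℝ) : ℂ) := by
    intro x
    have h1 : A x = Γ ((ContinuousLinearMap.adjoint Γ) x) := rfl
    rw [h1, ← ContinuousLinearMap.adjoint_inner_left Γ, inner_self_eq_norm_sq_to_K]
    norm_cast
  have hsum_real : (gramB A v N).det / (gramG A v N).det
      = (((∑ j, ‖(ContinuousLinearMap.adjoint Γ) (f j)‖ ^ 2 : ℝ)) : ℂ) := by
    rw [← hf_sum]
    rw [Finset.sum_congr rfl fun j _ => hAx (f j)]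
    push_cast
    ring
  -- summability facts
  have hg0 : ∀ m : ℕ, 0 ≤ ‖c m‖ ^ 2 := fun m => sq_nonneg _
  have hgsum : Summable (fun m : ℕ => ((m : ℝ) + 1) * ‖c m‖ ^ 2) := by
    refine (hc.2.add (summable_sq_of_memℓp hc.1)).congr fun m => ?_
    ring
  have hβ : ∀ p : ℕ, ‖Γ (lp.single 2 p 1)‖ ^ 2 = ∑' n, ‖c (p + n)‖ ^ 2 := by
    intro p
    rw [hankel_single_norm_sq hΓ]
    exact tsum_congr fun n => by rw [Nat.add_comm p n]
  have hβ_sum : Summable (fun p : ℕ => ‖Γ (lp.single 2 p 1)‖ ^ 2) :=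
    (summable_outer_shifted hg0 hgsum).congr fun p => (hβ p).symm
  have htotal : (∑' p : ℕ, ‖Γ (lp.single 2 p 1)‖ ^ 2)
      = ∑' m : ℕ, ((m : ℝ) + 1) * ‖c m‖ ^ 2 := by
    rw [tsum_congr hβ]
    exact tsum_tsum_shifted hg0 hgsum
  set α : ℕ → ℝ := fun p => ∑ j, ‖⟪f j, Γ (lp.single 2 p 1)⟫_ℂ‖ ^ 2 with hα_def
  have hα_le : ∀ p, α p ≤ ‖Γ (lp.single 2 p 1)‖ ^ 2 := fun p =>
    hf_on.sum_inner_products_le _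
  have hα0 : ∀ p, 0 ≤ α p := fun p => Finset.sum_nonneg fun j _ => sq_nonneg _
  have hα_sum : Summable α := Summable.of_nonneg_of_le hα0 hα_le hβ_sum
  have hT : (∑ j, ‖(ContinuousLinearMap.adjoint Γ) (f j)‖ ^ 2) = ∑' p, α p := by
    have h1 : ∀ j, ‖(ContinuousLinearMap.adjoint Γ) (f j)‖ ^ 2
        = ∑' p, ‖⟪f j, Γ (lp.single 2 p 1)⟫_ℂ‖ ^ 2 := by
      intro j
      rw [hankel_adjoint_norm_sq]
      exact tsum_congr fun p => by rw [norm_inner_symm]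
    rw [Finset.sum_congr rfl fun j _ => h1 j]
    refine (Summable.tsum_finsetSum fun j _ => ?_).symm
    exact (hankel_adjoint_coord_summable (f j)).congr fun p => by rw [norm_inner_symm]
  have hbessel_iff : ∀ p, (α p = ‖Γ (lp.single 2 p 1)‖ ^ 2) ↔ Γ (lp.single 2 p 1) ∈ K := by
    intro p
    rw [← hf_span]
    exact bessel_eq_span_iff hf_on _
  have hre : ((gramB A v N).det / (gramG A v N).det).re = ∑' p, α p := by
    rw [hsum_real, Complex.ofReal_re, hT]
  have him : ((gramB A v N).det / (gramG A v N).det).im = 0 := by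
    rw [hsum_real, Complex.ofReal_im]
  -- membership of Krylov vectors in the range of Γ
  have hwmem : ∀ k : ℕ, (A ^ (k + 1)) v ∈ LinearMap.range Γ.toLinearMap := by
    intro k
    refine ⟨(ContinuousLinearMap.adjoint Γ) ((A ^ k) v), ?_⟩
    show Γ _ = _
    rw [pow_succ']
    rfl
  have hvmem : v ∈ LinearMap.range Γ.toLinearMap := by
    refine ⟨lp.single 2 0 1, ?_⟩
    apply lp.ext
    funext n
    show (Γ (lp.single 2 0 1) : ℕ → ℂ) n = c n
    rw [hankel_single_coord hΓ, Nat.add_zero]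
  have humem : ∀ k : Fin N, (A ^ (k : ℕ)) v ∈ LinearMap.range Γ.toLinearMap := by
    intro k
    rcases Nat.eq_zero_or_pos (k : ℕ) with h | h
    · rw [h, pow_zero]
      simpa using hvmem
    · obtain ⟨m, hm⟩ := Nat.exists_eq_succ_of_ne_zero (Nat.pos_iff_ne_zero.mp h)
      rw [hm]
      exact hwmem m
  have hKrank : Module.rank ℂ K = (N : Cardinal) := by
    rw [← Module.finrank_eq_rank ℂ (↥K), hrkK]
  have hrange_iff : (LinearMap.range Γ.toLinearMap ≤ K)
      ↔ LinearMap.rank Γ.toLinearMap = N := by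
    constructor
    · intro hsub
      have h1 : LinearMap.rank Γ.toLinearMap ≤ N := by
        calc LinearMap.rank Γ.toLinearMap
            = Module.rank ℂ (LinearMap.range Γ.toLinearMap) := rfl
          _ ≤ Module.rank ℂ K := Submodule.rank_mono hsub
          _ = N := hKrank
      have h2 : (N : Cardinal) ≤ LinearMap.rank Γ.toLinearMap := by
        have hw' : LinearIndependent ℂ
            (fun k : Fin N => (⟨(A ^ ((k : ℕ) + 1)) v, hwmem (k : ℕ)⟩ :
              LinearMap.range Γ.toLinearMap)) := by
          apply LinearIndependent.of_comp (LinearMap.range Γ.toLinearMap).subtype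
          exact hind
        have := hw'.cardinal_le_rank
        simpa using this
      exact le_antisymm h1 h2
    · intro hrank
      haveI hfd : FiniteDimensional ℂ (LinearMap.range Γ.toLinearMap) := by
        apply Module.rank_lt_aleph0_iff.mp
        rw [show Module.rank ℂ (LinearMap.range Γ.toLinearMap) = (N : Cardinal) from hrank]
        exact Cardinal.nat_lt_aleph0 N
      have hfr : Module.finrank ℂ (LinearMap.range Γ.toLinearMap) = N :=
        Module.finrank_eq_of_rank_eq hrank
      have hK'le : Submodule.span ℂ (Set.range (fun k : Fin N => (A ^ ((k : ℕ) + 1)) v))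
          ≤ LinearMap.range Γ.toLinearMap := by
        rw [Submodule.span_le]
        rintro x ⟨k, rfl⟩
        exact hwmem (k : ℕ)
      have hKle : K ≤ LinearMap.range Γ.toLinearMap := by
        rw [hK_def, Submodule.span_le]
        rintro x ⟨k, rfl⟩
        exact humem k
      have hKeq : K = LinearMap.range Γ.toLinearMap :=
        Submodule.eq_of_le_of_finrank_le hKle (by rw [hfr, hrkK])
      exact hKeq.ge
  have hmemK_iff : (∀ p : ℕ, Γ (lp.single 2 p 1) ∈ K)
      ↔ LinearMap.range Γ.toLinearMap ≤ K := by
    constructor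
    · intro hp
      rintro x ⟨y, rfl⟩
      rw [← Submodule.orthogonal_orthogonal K]
      rw [Submodule.mem_orthogonal]
      intro z hz
      have hΓz : (ContinuousLinearMap.adjoint Γ) z = 0 := by
        apply lp.ext
        funext q
        show ((ContinuousLinearMap.adjoint Γ) z : ℕ → ℂ) q = 0
        rw [hankel_adjoint_coord]
        exact hz (Γ (lp.single 2 q 1)) (hp q)
      show ⟪z, Γ y⟫_ℂ = 0
      rw [← ContinuousLinearMap.adjoint_inner_left Γ, hΓz, inner_zero_left]
    · intro hr p
      exact hr ⟨lp.single 2 p 1, rfl⟩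
  refine ⟨hdetG, him, ?_, ?_⟩
  · rw [hre]
    have h1 : (∑' p, α p) ≤ ∑' p : ℕ, ‖Γ (lp.single 2 p 1)‖ ^ 2 :=
      Summable.tsum_le_tsum hα_le hα_sum hβ_sum
    calc (∑' p, α p) ≤ ∑' p : ℕ, ‖Γ (lp.single 2 p 1)‖ ^ 2 := h1
      _ = ∑' n : ℕ, ((n : ℝ) + 1) * ‖c n‖ ^ 2 := htotal
  · constructor
    · intro heq
      rw [hre] at heq
      have h0 : (∑' p : ℕ, ‖Γ (lp.single 2 p 1)‖ ^ 2) = ∑' p, α p := htotal.trans heq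
      have hall : ∀ p, α p = ‖Γ (lp.single 2 p 1)‖ ^ 2 := by
        by_contra hno
        push_neg at hno
        obtain ⟨q, hq⟩ := hno
        have hsub : Summable (fun p : ℕ => ‖Γ (lp.single 2 p 1)‖ ^ 2 - α p) :=
          hβ_sum.sub hα_sum
        have hpos : 0 < ∑' p : ℕ, (‖Γ (lp.single 2 p 1)‖ ^ 2 - α p) := by
          refine Summable.tsum_pos hsub (fun p => sub_nonneg.mpr (hα_le p)) q ?_
          have := lt_of_le_of_ne (hα_le q) hq
          linarith
        rw [Summable.tsum_sub hβ_sum hα_sum, h0, sub_self] at hpos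
        exact lt_irrefl 0 hpos
      apply hrange_iff.mp
      apply hmemK_iff.mp
      intro p
      exact (hbessel_iff p).mp (hall p)
    · intro hrank
      have hall : ∀ p, α p = ‖Γ (lp.single 2 p 1)‖ ^ 2 := fun p =>
        (hbessel_iff p).mpr (hmemK_iff.mpr (hrange_iff.mpr hrank) p)
      rw [hre]
      calc (∑' n : ℕ, ((n : ℝ) + 1) * ‖c n‖ ^ 2)
          = ∑' p : ℕ, ‖Γ (lp.single 2 p 1)‖ ^ 2 := htotal.symm
        _ = ∑' p, α p := tsum_congr fun p => (hall p).symm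


end
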